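/- (Rotation lemma for quantiles, part (d).) Let x : Fin N → ℝ² (N ≥ 1) be data points, let w, v² ∈ ℝ² be linearly independent and set w(s) := (1−s)·w + s·v². Let j ∈ Fin N, S ⊆ Fin N with j ∉ S, and s̄ ∈ (0,1]. Assume: (i) for every s ∈ [0, s̄], ⟪w(s), x i⟫ ≤ ⟪w(s), x j⟫ for all i ∈ S and ⟪w(s), x i⟫ ≥ ⟪w(s), x j⟫ for all i ∉ S ∪ {j}; (ii) for every i ∈ S with ⟪w, x i⟫ = ⟪w, x j⟫ one has ⟪v², x i⟫ < ⟪v², x j⟫; and (iii) for every i ∉ S ∪ {j} with ⟪w, x i⟫ = ⟪w, x j⟫ one has ⟪v², x i⟫ > ⟪v², x j⟫. Then for every s ∈ (0, s̄), the only index i with ⟪w(s), x i⟫ = ⟪w(s), x j⟫ is i = j, i.e. #{i ∈ Fin N : ⟪w(s), x i⟫ = ⟪w(s), x j⟫} = 1. -/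

import Mathlib

open scoped RealInnerProductSpace

abbrev E2 := EuclideanSpace ℝ (Fin 2)

theorem stmt11 {N : ℕ} (hN : 1 ≤ N) (x : Fin N → E2)
    (w v2 : E2) (hv : LinearIndependent ℝ ![w, v2])
    (j : Fin N) (S : Finset (Fin N)) (hjS : j ∉ S)
    (sBar : ℝ) (hsBar : sBar ∈ Set.Ioc (0 : ℝ) 1)
    (hle : ∀ s ∈ Set.Icc (0 : ℝ) sBar, ∀ i ∈ S,
      ⟪(1 - s) • w + s • v2, x i⟫ ≤ ⟪(1 - s) • w + s • v2, x j⟫)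
    (hge : ∀ s ∈ Set.Icc (0 : ℝ) sBar, ∀ i : Fin N, i ∉ S → i ≠ j →
      ⟪(1 - s) • w + s • v2, x j⟫ ≤ ⟪(1 - s) • w + s • v2, x i⟫)
    (hS2 : ∀ i ∈ S, ⟪w, x i⟫ = ⟪w, x j⟫ → ⟪v2, x i⟫ < ⟪v2, x j⟫)
    (hS3 : ∀ i : Fin N, i ∉ S → i ≠ j → ⟪w, x i⟫ = ⟪w, x j⟫ → ⟪v2, x j⟫ < ⟪v2, x i⟫) :
    ∀ s ∈ Set.Ioo (0 : ℝ) sBar,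
      {i : Fin N | ⟪(1 - s) • w + s • v2, x i⟫ = ⟪(1 - s) • w + s • v2, x j⟫}.ncard = 1 := by
  intro s hs
  obtain ⟨hs0, hssB⟩ := hs
  obtain ⟨hsB0, hsB1⟩ := hsBar
  have key : ∀ (t : ℝ) (y : E2),
      ⟪(1 - t) • w + t • v2, y⟫ = (1 - t) * ⟪w, y⟫ + t * ⟪v2, y⟫ := by
    intro t y
    simp [inner_add_left, real_inner_smul_left]
  have hset : {i : Fin N | ⟪(1 - s) • w + s • v2, x i⟫ = ⟪(1 - s) • w + s • v2, x j⟫}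
      = {j} := by
    ext i
    simp only [Set.mem_setOf_eq, Set.mem_singleton_iff]
    constructor
    · intro h
      by_contra hij
      rw [key, key] at h
      by_cases hiS : i ∈ S
      · have h0 := hle 0 ⟨le_refl 0, hsB0.le⟩ i hiS
        have h1 := hle sBar ⟨hsB0.le, le_refl sBar⟩ i hiS
        rw [key, key] at h0 h1
        by_cases hwe : ⟪w, x i⟫ = ⟪w, x j⟫
        · have hvlt := hS2 i hiS hwe
          rw [hwe] at h
          have := mul_pos hs0 (sub_pos.2 hvlt)
          nlinarith
        · have hwlt : ⟪w, x i⟫ < ⟪w, x j⟫ := lt_of_le_of_ne (by nlinarith) hwe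
          have H1 := mul_le_mul_of_nonneg_left h1 hs0.le
          have H2 := congrArg (fun z => sBar * z) h
          nlinarith [mul_pos (sub_pos.2 hwlt) (sub_pos.2 hssB)]
      · have h0 := hge 0 ⟨le_refl 0, hsB0.le⟩ i hiS hij
        have h1 := hge sBar ⟨hsB0.le, le_refl sBar⟩ i hiS hij
        rw [key, key] at h0 h1
        by_cases hwe : ⟪w, x i⟫ = ⟪w, x j⟫
        · have hvlt := hS3 i hiS hij hwe
          rw [hwe] at h
          have := mul_pos hs0 (sub_pos.2 hvlt)
          nlinarith
        · have hwlt : ⟪w, x j⟫ < ⟪w, x i⟫ :=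
            lt_of_le_of_ne (by nlinarith) (fun e => hwe e.symm)
          have H1 := mul_le_mul_of_nonneg_left h1 hs0.le
          have H2 := congrArg (fun z => sBar * z) h
          nlinarith [mul_pos (sub_pos.2 hwlt) (sub_pos.2 hssB)]
    · rintro rfl; rfl
  rw [hset, Set.ncard_singleton]
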